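/- For τ, μ > 0 and Y* ∈ ℝ^{m×n}, the matrix S_{τμ}(Y*) is the unique minimizer of the strictly convex function X ↦ τμ‖X‖_* + (1/2)‖X − Y*‖_F² over ℝ^{m×n}. -/

import Mathlib

open scoped BigOperators
open Matrix

noncomputable section

/-- Frobenius (trace) inner product of real matrices. -/
def frobInner {m n : ℕ} (X Y : Matrix (Fin m) (Fin n) ℝ) : ℝ :=
  ∑ i, ∑ j, X i j * Y i j

/-- Frobenius norm of a real matrix. -/
def frobNorm {m n : ℕ} (X : Matrix (Fin m) (Fin n) ℝ) : ℝ :=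
  Real.sqrt (frobInner X X)

/-- Euclidean norm of a vector in ℝ^p. -/
def vecNorm {p : ℕ} (b : Fin p → ℝ) : ℝ :=
  Real.sqrt (∑ i, b i ^ 2)

/-- Nuclear norm: the sum of the singular values of X (square roots of the
eigenvalues of X Xᵀ). -/
def nuclearNorm {m n : ℕ} (X : Matrix (Fin m) (Fin n) ℝ) : ℝ :=
  ∑ i, Real.sqrt ((Matrix.isHermitian_mul_conjTranspose_self X).eigenvalues i)

/-- Rectangular diagonal matrix with diagonal entries σ. -/
def rectDiag {m n : ℕ} (σ : Fin m → ℝ) : Matrix (Fin m) (Fin n) ℝ :=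
  Matrix.of fun i j => if (j : ℕ) = (i : ℕ) then σ i else 0

/-- `(U, σ, V)` is a (full) singular value decomposition of `Y`, with the
singular values σ nonnegative and nonincreasing. -/
def IsSVD {m n : ℕ} (Y : Matrix (Fin m) (Fin n) ℝ) (U : Matrix (Fin m) (Fin m) ℝ)
    (σ : Fin m → ℝ) (V : Matrix (Fin n) (Fin n) ℝ) : Prop :=
  Uᵀ * U = 1 ∧ Vᵀ * V = 1 ∧ (∀ i, 0 ≤ σ i) ∧ (∀ i j : Fin m, i ≤ j → σ j ≤ σ i) ∧
    Y = U * rectDiag σ * Vᵀ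

/-- `Z = S_μ(Y)`: soft shrinkage of the singular values of `Y` by `μ`. -/
def IsSoftShrink {m n : ℕ} (μ : ℝ) (Y Z : Matrix (Fin m) (Fin n) ℝ) : Prop :=
  ∃ U σ V, IsSVD Y U σ V ∧ Z = U * rectDiag (fun i => max (σ i - μ) 0) * Vᵀ

/-- `Z = R_r(Y)`: hard thresholding keeping the `r` largest singular values of `Y`. -/
def IsHardThresh {m n : ℕ} (r : ℕ) (Y Z : Matrix (Fin m) (Fin n) ℝ) : Prop :=
  ∃ U σ V, IsSVD Y U σ V ∧ Z = U * rectDiag (fun i => if (i : ℕ) < r then σ i else 0) * Vᵀ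

section SoftShrinkAux

open Polynomial

variable {m n k : ℕ}

/-! ### Frobenius inner product basics -/

lemma frobInner_eq_trace (A B : Matrix (Fin m) (Fin n) ℝ) :
    frobInner A B = Matrix.trace (A * Bᵀ) := by
  simp [frobInner, Matrix.trace, Matrix.diag, Matrix.mul_apply]

lemma frobInner_comm (A B : Matrix (Fin m) (Fin n) ℝ) : frobInner A B = frobInner B A := by
  simp [frobInner, mul_comm]

lemma frobInner_nonneg (A : Matrix (Fin m) (Fin n) ℝ) : 0 ≤ frobInner A A := by
  apply Finset.sum_nonneg; intro i _
  apply Finset.sum_nonneg; intro j _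
  exact mul_self_nonneg _

lemma frobNorm_sq (A : Matrix (Fin m) (Fin n) ℝ) : frobNorm A ^ 2 = frobInner A A :=
  Real.sq_sqrt (frobInner_nonneg A)

lemma frobInner_sub_right (A B C : Matrix (Fin m) (Fin n) ℝ) :
    frobInner A (B - C) = frobInner A B - frobInner A C := by
  simp [frobInner_eq_trace, Matrix.transpose_sub, Matrix.mul_sub]

lemma frobInner_sub_left (A B C : Matrix (Fin m) (Fin n) ℝ) :
    frobInner (A - B) C = frobInner A C - frobInner B C := by
  rw [frobInner_comm, frobInner_sub_right, frobInner_comm C A, frobInner_comm C B]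

lemma frobInner_add_right (A B C : Matrix (Fin m) (Fin n) ℝ) :
    frobInner A (B + C) = frobInner A B + frobInner A C := by
  simp [frobInner_eq_trace, Matrix.transpose_add, Matrix.mul_add]

lemma frobInner_add_left (A B C : Matrix (Fin m) (Fin n) ℝ) :
    frobInner (A + B) C = frobInner A C + frobInner B C := by
  rw [frobInner_comm, frobInner_add_right, frobInner_comm C A, frobInner_comm C B]

lemma frobInner_neg_left (A B : Matrix (Fin m) (Fin n) ℝ) :
    frobInner (-A) B = -frobInner A B := by
  simp [frobInner_eq_trace, Matrix.neg_mul]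

/-- Expansion of the quadratic term. -/
lemma frob_expand (A B : Matrix (Fin m) (Fin n) ℝ) :
    frobInner (A + B) (A + B) =
      frobInner A A + 2 * frobInner A B + frobInner B B := by
  rw [frobInner_add_left, frobInner_add_right, frobInner_add_right, frobInner_comm B A]
  ring

/-! ### Characteristic polynomial of conjugated and diagonal matrices -/

lemma charpoly_conj_eq (P B Q : Matrix (Fin k) (Fin k) ℝ) (hPQ : P * Q = 1) :
    (P * B * Q).charpoly = B.charpoly := by
  have hmap : P.map (C : ℝ →+* ℝ[X]) * Q.map (C : ℝ →+* ℝ[X]) = 1 := by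
    rw [← Matrix.map_mul, hPQ]; simp
  have hc : charmatrix (P * B * Q) =
      P.map (C : ℝ →+* ℝ[X]) * charmatrix B * Q.map (C : ℝ →+* ℝ[X]) := by
    rw [charmatrix, charmatrix, Matrix.mul_sub, Matrix.sub_mul]
    congr 1
    · have hcomm := (Matrix.scalar_commute (X : ℝ[X])
        (fun r' => Commute.all _ _) (P.map (C : ℝ →+* ℝ[X])))
      symm
      calc P.map (C : ℝ →+* ℝ[X]) * Matrix.scalar (Fin k) (X : ℝ[X]) * Q.map (C : ℝ →+* ℝ[X])
          = Matrix.scalar (Fin k) (X : ℝ[X]) * P.map (C : ℝ →+* ℝ[X]) * Q.map (C : ℝ →+* ℝ[X]) := by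
            rw [← hcomm.eq]
        _ = Matrix.scalar (Fin k) (X : ℝ[X]) * (P.map (C : ℝ →+* ℝ[X]) * Q.map (C : ℝ →+* ℝ[X])) := by
            rw [mul_assoc]
        _ = Matrix.scalar (Fin k) (X : ℝ[X]) := by rw [hmap, mul_one]
    · simp only [RingHom.mapMatrix_apply, Matrix.map_mul]
  rw [Matrix.charpoly, Matrix.charpoly, hc, Matrix.det_mul, Matrix.det_mul]
  have hdet : (P.map (C : ℝ →+* ℝ[X])).det * (Q.map (C : ℝ →+* ℝ[X])).det = 1 := by
    rw [← Matrix.det_mul, hmap, Matrix.det_one]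
  calc (P.map (C : ℝ →+* ℝ[X])).det * (charmatrix B).det * (Q.map (C : ℝ →+* ℝ[X])).det
      = (charmatrix B).det * ((P.map (C : ℝ →+* ℝ[X])).det * (Q.map (C : ℝ →+* ℝ[X])).det) := by ring
    _ = (charmatrix B).det := by rw [hdet, mul_one]

lemma charpoly_diagonal_eq (v : Fin k → ℝ) :
    Matrix.charpoly (Matrix.diagonal v) = ∏ i, (X - C (v i)) := by
  have h : charmatrix (Matrix.diagonal v) =
      Matrix.diagonal (fun i => (X : ℝ[X]) - C (v i)) := by
    ext i j
    by_cases h : i = j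
    · subst h; simp
    · simp [h, Matrix.diagonal_apply_ne _ h]
  rw [Matrix.charpoly, h, Matrix.det_diagonal]

/-- Eigenvalue multiset of a hermitian matrix orthogonally similar to a diagonal matrix. -/
lemma eigenvalues_multiset_eq (A : Matrix (Fin k) (Fin k) ℝ) (hA : A.IsHermitian)
    (W : Matrix (Fin k) (Fin k) ℝ) (v : Fin k → ℝ)
    (hW : Wᵀ * W = 1) (hAeq : A = W * Matrix.diagonal v * Wᵀ) :
    Multiset.map hA.eigenvalues Finset.univ.val = Multiset.map v Finset.univ.val := by
  have hW' : W * Wᵀ = 1 := mul_eq_one_comm.mp hW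
  have hWe : (hA.eigenvectorUnitary : Matrix (Fin k) (Fin k) ℝ)ᵀ *
      (hA.eigenvectorUnitary : Matrix (Fin k) (Fin k) ℝ) = 1 := by
    have := Matrix.mem_unitaryGroup_iff'.mp hA.eigenvectorUnitary.2
    rwa [Matrix.star_eq_conjTranspose] at this
  have hWe' : (hA.eigenvectorUnitary : Matrix (Fin k) (Fin k) ℝ) *
      (hA.eigenvectorUnitary : Matrix (Fin k) (Fin k) ℝ)ᵀ = 1 := mul_eq_one_comm.mp hWe
  have hspec : A = (hA.eigenvectorUnitary : Matrix (Fin k) (Fin k) ℝ) *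
      Matrix.diagonal hA.eigenvalues * (hA.eigenvectorUnitary : Matrix (Fin k) (Fin k) ℝ)ᵀ := by
    have := hA.spectral_theorem
    rw [Unitary.conjStarAlgAut_apply, Matrix.star_eq_conjTranspose] at this
    simpa [RCLike.ofReal_real_eq_id] using this
  have h1 : A.charpoly = ∏ i, (X - C (hA.eigenvalues i)) := by
    conv_lhs => rw [hspec]
    rw [charpoly_conj_eq _ _ _ hWe', charpoly_diagonal_eq]
  have h2 : A.charpoly = ∏ i, (X - C (v i)) := by
    conv_lhs => rw [hAeq]
    rw [charpoly_conj_eq _ _ _ hW', charpoly_diagonal_eq]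
  have hprod : (Multiset.map hA.eigenvalues Finset.univ.val).map (fun a => X - C a) =
      (Multiset.map v Finset.univ.val).map (fun a => X - C a) → _ := fun h => h
  have key : ((Multiset.map hA.eigenvalues Finset.univ.val).map (fun a => (X : ℝ[X]) - C a)).prod =
      ((Multiset.map v Finset.univ.val).map (fun a => (X : ℝ[X]) - C a)).prod := by
    rw [Multiset.map_map, Multiset.map_map]
    have e1 : ∏ i, ((X : ℝ[X]) - C (hA.eigenvalues i)) =
        (Multiset.map ((fun a => (X:ℝ[X]) - C a) ∘ hA.eigenvalues) Finset.univ.val).prod :=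
      Finset.prod_eq_multiset_prod _ _
    have e2 : ∏ i, ((X : ℝ[X]) - C (v i)) =
        (Multiset.map ((fun a => (X:ℝ[X]) - C a) ∘ v) Finset.univ.val).prod :=
      Finset.prod_eq_multiset_prod _ _
    rw [← e1, ← e2, ← h1, ← h2]
  have := congrArg Polynomial.roots key
  rwa [Polynomial.roots_multiset_prod_X_sub_C, Polynomial.roots_multiset_prod_X_sub_C] at this

/-- Sum of a function over the eigenvalues. -/
lemma sum_g_eigenvalues (A : Matrix (Fin k) (Fin k) ℝ) (hA : A.IsHermitian)
    (W : Matrix (Fin k) (Fin k) ℝ) (v : Fin k → ℝ)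
    (hW : Wᵀ * W = 1) (hAeq : A = W * Matrix.diagonal v * Wᵀ) (g : ℝ → ℝ) :
    ∑ i, g (hA.eigenvalues i) = ∑ i, g (v i) := by
  have h := eigenvalues_multiset_eq A hA W v hW hAeq
  have e1 : ∑ i, g (hA.eigenvalues i) =
      ((Multiset.map hA.eigenvalues Finset.univ.val).map g).sum := by
    rw [Multiset.map_map]; exact Finset.sum_eq_multiset_sum _ _
  have e2 : ∑ i, g (v i) = ((Multiset.map v Finset.univ.val).map g).sum := by
    rw [Multiset.map_map]; exact Finset.sum_eq_multiset_sum _ _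
  rw [e1, e2, h]

/-! ### rectDiag computations -/

lemma rectDiag_mul_transpose (hmn : m ≤ n) (e d : Fin m → ℝ) :
    rectDiag (n := n) e * (rectDiag (n := n) d)ᵀ = Matrix.diagonal (fun i => e i * d i) := by
  ext i i'
  rw [Matrix.mul_apply]
  have hi : (i : ℕ) < n := lt_of_lt_of_le i.isLt hmn
  rw [Finset.sum_eq_single (⟨(i : ℕ), hi⟩ : Fin n)]
  · by_cases h : i = i'
    · subst h; simp [rectDiag, Matrix.diagonal]
    · have h' : ¬ ((i : ℕ) = (i' : ℕ)) := fun hh => h (Fin.ext hh)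
      simp [rectDiag, Matrix.diagonal_apply_ne _ h, h']
  · intro j _ hj
    have hj' : ¬ ((j : ℕ) = (i : ℕ)) := fun hh => hj (Fin.ext hh)
    simp [rectDiag, hj']
  · intro h; exact absurd (Finset.mem_univ _) h

lemma UDV_mul_transpose (hmn : m ≤ n) (U : Matrix (Fin m) (Fin m) ℝ)
    (V : Matrix (Fin n) (Fin n) ℝ) (hV : Vᵀ * V = 1) (e : Fin m → ℝ) :
    (U * rectDiag (n := n) e * Vᵀ) * (U * rectDiag (n := n) e * Vᵀ)ᵀ =
      U * Matrix.diagonal (fun i => e i * e i) * Uᵀ := by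
  have : (U * rectDiag (n := n) e * Vᵀ)ᵀ = V * (rectDiag (n := n) e)ᵀ * Uᵀ := by
    simp [Matrix.transpose_mul, Matrix.mul_assoc]
  rw [this]
  calc (U * rectDiag (n := n) e * Vᵀ) * (V * (rectDiag (n := n) e)ᵀ * Uᵀ)
      = U * (rectDiag (n := n) e * ((Vᵀ * V) * ((rectDiag (n := n) e)ᵀ * Uᵀ))) := by
        simp only [Matrix.mul_assoc]
    _ = U * (rectDiag (n := n) e * (rectDiag (n := n) e)ᵀ * Uᵀ) := by
        rw [hV, Matrix.one_mul, Matrix.mul_assoc (rectDiag (n := n) e)]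
    _ = U * Matrix.diagonal (fun i => e i * e i) * Uᵀ := by
        rw [rectDiag_mul_transpose hmn, Matrix.mul_assoc]

/-- Nuclear norm of `U * rectDiag d * Vᵀ` is `∑ d` for nonnegative `d`. -/
lemma nuclearNorm_UDV (hmn : m ≤ n) (U : Matrix (Fin m) (Fin m) ℝ)
    (V : Matrix (Fin n) (Fin n) ℝ) (hU : Uᵀ * U = 1) (hV : Vᵀ * V = 1)
    (d : Fin m → ℝ) (hd : ∀ i, 0 ≤ d i) :
    nuclearNorm (U * rectDiag (n := n) d * Vᵀ) = ∑ i, d i := by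
  set M := U * rectDiag (n := n) d * Vᵀ with hM
  have hA : (M * Mᴴ).IsHermitian := Matrix.isHermitian_mul_conjTranspose_self M
  have hMM : M * Mᴴ = U * Matrix.diagonal (fun i => d i * d i) * Uᵀ := by
    have : Mᴴ = Mᵀ := rfl
    rw [this, hM, UDV_mul_transpose hmn U V hV d]
  have hsum : ∑ i, Real.sqrt (hA.eigenvalues i) = ∑ i, Real.sqrt (d i * d i) :=
    sum_g_eigenvalues (M * Mᴴ) hA U (fun i => d i * d i) hU hMM Real.sqrt
  rw [nuclearNorm, hsum]
  exact Finset.sum_congr rfl fun i _ => Real.sqrt_mul_self (hd i)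

/-- Frobenius inner product of two matrices with common singular frames. -/
lemma frobInner_UDV (hmn : m ≤ n) (U : Matrix (Fin m) (Fin m) ℝ)
    (V : Matrix (Fin n) (Fin n) ℝ) (hU : Uᵀ * U = 1) (hV : Vᵀ * V = 1)
    (e d : Fin m → ℝ) :
    frobInner (U * rectDiag (n := n) e * Vᵀ) (U * rectDiag (n := n) d * Vᵀ) =
      ∑ i, e i * d i := by
  rw [frobInner_eq_trace]
  have : (U * rectDiag (n := n) d * Vᵀ)ᵀ = V * (rectDiag (n := n) d)ᵀ * Uᵀ := by
    simp [Matrix.transpose_mul, Matrix.mul_assoc]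
  rw [this]
  have h1 : (U * rectDiag (n := n) e * Vᵀ) * (V * (rectDiag (n := n) d)ᵀ * Uᵀ) =
      U * Matrix.diagonal (fun i => e i * d i) * Uᵀ := by
    calc (U * rectDiag (n := n) e * Vᵀ) * (V * (rectDiag (n := n) d)ᵀ * Uᵀ)
        = U * (rectDiag (n := n) e * ((Vᵀ * V) * ((rectDiag (n := n) d)ᵀ * Uᵀ))) := by
          simp only [Matrix.mul_assoc]
      _ = U * (rectDiag (n := n) e * (rectDiag (n := n) d)ᵀ * Uᵀ) := by
          rw [hV, Matrix.one_mul, Matrix.mul_assoc (rectDiag (n := n) e)]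
      _ = U * Matrix.diagonal (fun i => e i * d i) * Uᵀ := by
          rw [rectDiag_mul_transpose hmn, Matrix.mul_assoc]
  rw [h1, Matrix.trace_mul_cycle, hU, Matrix.one_mul, Matrix.trace_diagonal]

/-! ### Quadratic form computations -/

lemma sum_mul_vecMul (G X : Matrix (Fin m) (Fin n) ℝ) (v : Fin m → ℝ) :
    ∑ j, (∑ i, G i j * v i) * (∑ i, X i j * v i) = v ⬝ᵥ ((G * Xᵀ) *ᵥ v) := by
  have hG : ∀ j, ∑ i, G i j * v i = (v ᵥ* G) j := fun j => by
    simp [Matrix.vecMul, dotProduct, mul_comm]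
  have hX : ∀ j, ∑ i, X i j * v i = (v ᵥ* X) j := fun j => by
    simp [Matrix.vecMul, dotProduct, mul_comm]
  have h2 : v ⬝ᵥ ((G * Xᵀ) *ᵥ v) = (v ᵥ* G) ⬝ᵥ (v ᵥ* X) := by
    rw [← Matrix.mulVec_mulVec, Matrix.dotProduct_mulVec, Matrix.mulVec_transpose]
  rw [h2]
  simp only [dotProduct]
  exact Finset.sum_congr rfl fun j _ => by rw [hG j, hX j]

lemma sum_sq_vecMul (M : Matrix (Fin m) (Fin n) ℝ) (v : Fin m → ℝ) :
    ∑ j, (∑ i, M i j * v i) ^ 2 = v ⬝ᵥ ((M * Mᵀ) *ᵥ v) := by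
  rw [← sum_mul_vecMul M M v]
  exact Finset.sum_congr rfl fun j _ => pow_two _

lemma conj_entry_dot (P : Matrix (Fin m) (Fin m) ℝ) (B : Matrix (Fin m) (Fin m) ℝ) (k : Fin m) :
    (Pᵀ * B * P) k k = (fun i => P i k) ⬝ᵥ (B *ᵥ fun i => P i k) := by
  simp only [Matrix.mul_apply, Matrix.transpose_apply, Matrix.mulVec, dotProduct,
    Finset.sum_mul, Finset.mul_sum]
  rw [Finset.sum_comm]
  exact Finset.sum_congr rfl fun i _ => Finset.sum_congr rfl fun i' _ => by ring

/-- Entry `k k` of `Pᵀ * (G * Xᵀ) * P`. -/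
lemma conj_entry (P : Matrix (Fin m) (Fin m) ℝ) (G X : Matrix (Fin m) (Fin n) ℝ) (k : Fin m) :
    (Pᵀ * (G * Xᵀ) * P) k k = ∑ j, (∑ i, G i j * P i k) * (∑ i, X i j * P i k) := by
  rw [conj_entry_dot, ← sum_mul_vecMul]

end SoftShrinkAux

section SoftShrinkMain

variable {m n : ℕ}

/-- Spectral-norm-type bound for `U * rectDiag e * Vᵀ` with `0 ≤ e ≤ c`. -/
lemma specBound (hmn : m ≤ n) (U : Matrix (Fin m) (Fin m) ℝ)
    (V : Matrix (Fin n) (Fin n) ℝ) (hU : Uᵀ * U = 1) (hV : Vᵀ * V = 1)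
    (e : Fin m → ℝ) (c : ℝ) (he : ∀ i, e i * e i ≤ c ^ 2) (v : Fin m → ℝ) :
    ∑ j, (∑ i, (U * rectDiag (n := n) e * Vᵀ) i j * v i) ^ 2 ≤ c ^ 2 * ∑ i, v i ^ 2 := by
  rw [sum_sq_vecMul, UDV_mul_transpose hmn U V hV e]
  have hU' : U * Uᵀ = 1 := mul_eq_one_comm.mp hU
  set a : Fin m → ℝ := Uᵀ *ᵥ v with ha
  have h1 : v ⬝ᵥ ((U * Matrix.diagonal (fun i => e i * e i) * Uᵀ) *ᵥ v) =
      ∑ k, (e k * e k) * (a k * a k) := by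
    rw [← Matrix.mulVec_mulVec, ← Matrix.mulVec_mulVec,
      Matrix.dotProduct_mulVec v U _, Matrix.mulVec_transpose]
    have : v ᵥ* U = a := by rw [ha, Matrix.mulVec_transpose]
    rw [this]
    simp [dotProduct, Matrix.mulVec_diagonal]
    exact Finset.sum_congr rfl fun k _ => by ring
  have h2 : ∑ i, v i ^ 2 = ∑ k, a k * a k := by
    have : ∑ k, a k * a k = a ⬝ᵥ a := by simp [dotProduct]
    rw [this, ha, Matrix.mulVec_transpose]
    have : (v ᵥ* U) ⬝ᵥ (v ᵥ* U) = v ⬝ᵥ ((U * Uᵀ) *ᵥ v) := by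
      rw [← Matrix.mulVec_mulVec, Matrix.dotProduct_mulVec v U _, Matrix.mulVec_transpose]
    rw [this, hU', Matrix.one_mulVec]
    simp [dotProduct, pow_two]
  rw [h1, h2, Finset.mul_sum]
  apply Finset.sum_le_sum
  intro k _
  have hak : 0 ≤ a k * a k := mul_self_nonneg _
  calc (e k * e k) * (a k * a k) ≤ c ^ 2 * (a k * a k) :=
    mul_le_mul_of_nonneg_right (he k) hak
    _ = c ^ 2 * (a k * a k) := rfl

/-- Duality bound: `⟨G, X⟩ ≤ c‖X‖_*` when `‖Gᵀv‖ ≤ c‖v‖` for all `v`. -/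
lemma dual_bound (G X : Matrix (Fin m) (Fin n) ℝ) (c : ℝ) (hc : 0 ≤ c)
    (hG : ∀ v : Fin m → ℝ, ∑ j, (∑ i, G i j * v i) ^ 2 ≤ c ^ 2 * ∑ i, v i ^ 2) :
    frobInner G X ≤ c * nuclearNorm X := by
  have hA : (X * Xᴴ).IsHermitian := Matrix.isHermitian_mul_conjTranspose_self X
  set W : Matrix (Fin m) (Fin m) ℝ := (hA.eigenvectorUnitary : Matrix (Fin m) (Fin m) ℝ) with hWdef
  have hW1 : Wᵀ * W = 1 := by
    have := Matrix.mem_unitaryGroup_iff'.mp hA.eigenvectorUnitary.2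
    rwa [Matrix.star_eq_conjTranspose] at this
  have hW2 : W * Wᵀ = 1 := mul_eq_one_comm.mp hW1
  have hspec : X * Xᴴ = W * Matrix.diagonal hA.eigenvalues * Wᵀ := by
    have := hA.spectral_theorem
    rw [Unitary.conjStarAlgAut_apply, Matrix.star_eq_conjTranspose] at this
    rw [RCLike.ofReal_real_eq_id, Function.id_comp] at this; exact this
  have hdiag : Wᵀ * (X * Xᴴ) * W = Matrix.diagonal hA.eigenvalues := by
    conv_lhs => rw [hspec]
    calc Wᵀ * (W * Matrix.diagonal hA.eigenvalues * Wᵀ) * W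
        = (Wᵀ * W) * Matrix.diagonal hA.eigenvalues * (Wᵀ * W) := by
          simp only [Matrix.mul_assoc]
      _ = Matrix.diagonal hA.eigenvalues := by rw [hW1, Matrix.one_mul, Matrix.mul_one]
  have hcol : ∀ k, ∑ i, (W i k) ^ 2 = 1 := by
    intro k
    have : (Wᵀ * W) k k = (1 : Matrix (Fin m) (Fin m) ℝ) k k := by rw [hW1]
    simpa [Matrix.mul_apply, Matrix.one_apply, pow_two] using this
  have hXcol : ∀ k, ∑ j, (∑ i, X i j * W i k) ^ 2 = hA.eigenvalues k := by
    intro k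
    have h1 : (Wᵀ * (X * Xᵀ) * W) k k = hA.eigenvalues k := by
      have hXX : X * Xᴴ = X * Xᵀ := rfl
      rw [← hXX, hdiag]; simp
    rw [← h1, conj_entry]
    refine Finset.sum_congr rfl fun j _ => ?_
    rw [pow_two]
  have heig_nonneg : ∀ k, 0 ≤ hA.eigenvalues k := fun k =>
    (Matrix.posSemidef_self_mul_conjTranspose X).eigenvalues_nonneg k
  have hfrob : frobInner G X = ∑ k, ∑ j, (∑ i, G i j * W i k) * (∑ i, X i j * W i k) := by
    rw [frobInner_eq_trace]
    have : Matrix.trace (G * Xᵀ) = Matrix.trace (Wᵀ * (G * Xᵀ) * W) := by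
      rw [Matrix.trace_mul_cycle, ← Matrix.mul_assoc, hW2, Matrix.one_mul]
    rw [this, Matrix.trace]
    refine Finset.sum_congr rfl fun k _ => ?_
    exact conj_entry W G X k
  rw [hfrob, nuclearNorm, Finset.mul_sum]
  apply Finset.sum_le_sum
  intro k _
  have hcs := Real.sum_mul_le_sqrt_mul_sqrt Finset.univ
    (fun j => ∑ i, G i j * W i k) (fun j => ∑ i, X i j * W i k)
  refine hcs.trans ?_
  rw [hXcol k]
  have hGb : Real.sqrt (∑ j, (∑ i, G i j * W i k) ^ 2) ≤ c := by
    have := hG (fun i => W i k)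
    have hb : ∑ j, (∑ i, G i j * W i k) ^ 2 ≤ c ^ 2 := by
      have h2 := this
      rw [hcol k, mul_one] at h2
      exact h2
    calc Real.sqrt (∑ j, (∑ i, G i j * W i k) ^ 2) ≤ Real.sqrt (c ^ 2) :=
      Real.sqrt_le_sqrt hb
      _ = c := Real.sqrt_sq hc
  exact mul_le_mul_of_nonneg_right hGb (Real.sqrt_nonneg _)

end SoftShrinkMain

/-- S_{τμ}(Y*) is the unique minimizer of X ↦ τμ‖X‖_* + (1/2)‖X − Y*‖_F². -/
theorem softShrink_is_unique_minimizer {m n : ℕ} (hmn : m ≤ n) (τ μ : ℝ)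
    (hτ : 0 < τ) (hμ : 0 < μ) (Ystar Z : Matrix (Fin m) (Fin n) ℝ)
    (hZ : IsSoftShrink (τ * μ) Ystar Z) :
    (∀ X : Matrix (Fin m) (Fin n) ℝ,
        τ * μ * nuclearNorm Z + (1 / 2) * frobNorm (Z - Ystar) ^ 2 ≤
          τ * μ * nuclearNorm X + (1 / 2) * frobNorm (X - Ystar) ^ 2) ∧
      ∀ X : Matrix (Fin m) (Fin n) ℝ,
        τ * μ * nuclearNorm X + (1 / 2) * frobNorm (X - Ystar) ^ 2 =
          τ * μ * nuclearNorm Z + (1 / 2) * frobNorm (Z - Ystar) ^ 2 → X = Z := by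
  obtain ⟨U, σ, V, hSVD, hZdef⟩ := hZ
  obtain ⟨hU, hV, hσ0, -, hY⟩ := hSVD
  set ν : ℝ := τ * μ with hνdef
  have hν : 0 < ν := mul_pos hτ hμ
  set d : Fin m → ℝ := fun i => max (σ i - ν) 0 with hd
  set e : Fin m → ℝ := fun i => min (σ i) ν with he
  have hd0 : ∀ i, 0 ≤ d i := fun i => le_max_right _ _
  have hec : ∀ i, e i * e i ≤ ν ^ 2 := by
    intro i
    have h1 : 0 ≤ e i := le_min (hσ0 i) hν.le
    have h2 : e i ≤ ν := min_le_right _ _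
    calc e i * e i ≤ ν * ν := mul_le_mul h2 h2 h1 hν.le
      _ = ν ^ 2 := (pow_two ν).symm
  have hed : ∀ i, e i + d i = σ i := by
    intro i
    rcases le_total (σ i) ν with h | h
    · simp [he, hd, min_eq_left h, max_eq_right (by linarith : σ i - ν ≤ 0)]
    · simp [he, hd, min_eq_right h, max_eq_left (by linarith : (0:ℝ) ≤ σ i - ν)]
  have hGdef : Ystar - Z = U * rectDiag (n := n) e * Vᵀ := by
    have hsplit : rectDiag (n := n) σ =
        rectDiag (n := n) e + rectDiag (n := n) d := by
      ext i j
      simp only [rectDiag, Matrix.of_apply, Matrix.add_apply]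
      by_cases h : (j : ℕ) = (i : ℕ)
      · simp only [h, if_true]
        exact (hed i).symm
      · simp [h]
    rw [show Ystar = U * rectDiag (n := n) σ * Vᵀ from hY,
      show Z = U * rectDiag (n := n) d * Vᵀ from hZdef, hsplit, Matrix.mul_add, Matrix.add_mul]
    abel
  have hnucZ : nuclearNorm Z = ∑ i, d i := by
    rw [hZdef]; exact nuclearNorm_UDV hmn U V hU hV d hd0
  have hGZ : frobInner (Ystar - Z) Z = ν * ∑ i, d i := by
    rw [hGdef, show Z = U * rectDiag (n := n) d * Vᵀ from hZdef, frobInner_UDV hmn U V hU hV e d, Finset.mul_sum]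
    refine Finset.sum_congr rfl fun i _ => ?_
    rcases le_total (σ i) ν with h | h
    · simp [he, hd, min_eq_left h, max_eq_right (by linarith : σ i - ν ≤ 0)]
    · simp [he, hd, min_eq_right h, max_eq_left (by linarith : (0:ℝ) ≤ σ i - ν)]
  have hGbound : ∀ X, frobInner (Ystar - Z) X ≤ ν * nuclearNorm X := by
    intro X
    rw [hGdef]
    exact dual_bound _ X ν hν.le (fun v => specBound hmn U V hU hV e ν hec v)
  -- main decomposition
  have main : ∀ X : Matrix (Fin m) (Fin n) ℝ,
      ν * nuclearNorm X + (1 / 2) * frobNorm (X - Ystar) ^ 2 =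
        ν * nuclearNorm Z + (1 / 2) * frobNorm (Z - Ystar) ^ 2 +
          (ν * nuclearNorm X - frobInner (Ystar - Z) X) +
          (1 / 2) * frobInner (X - Z) (X - Z) := by
    intro X
    have hexp : frobInner (X - Ystar) (X - Ystar)
        = frobInner (X - Z) (X - Z) + 2 * frobInner (X - Z) (Z - Ystar)
          + frobInner (Z - Ystar) (Z - Ystar) := by
      have h := frob_expand (X - Z) (Z - Ystar)
      rwa [sub_add_sub_cancel] at h
    have hcross : frobInner (X - Z) (Z - Ystar) =
        frobInner (Ystar - Z) Z - frobInner (Ystar - Z) X := by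
      rw [frobInner_comm, frobInner_sub_right]
      have e1 : Z - Ystar = -(Ystar - Z) := (neg_sub Ystar Z).symm
      rw [e1, frobInner_neg_left, frobInner_neg_left]
      ring
    simp only [frobNorm_sq]
    rw [hexp, hcross, hGZ, hnucZ]
    ring
  constructor
  · intro X
    have h := main X
    have h1 : 0 ≤ ν * nuclearNorm X - frobInner (Ystar - Z) X := by
      have := hGbound X; linarith
    have h2 : 0 ≤ frobInner (X - Z) (X - Z) := frobInner_nonneg _
    rw [h]
    linarith
  · intro X hX
    have h := main X
    have h1 : 0 ≤ ν * nuclearNorm X - frobInner (Ystar - Z) X := by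
      have := hGbound X; linarith
    have h2 : 0 ≤ frobInner (X - Z) (X - Z) := frobInner_nonneg _
    have hzero : frobInner (X - Z) (X - Z) = 0 := by
      rw [h] at hX
      linarith
    have hentry : ∀ i j, (X - Z) i j = 0 := by
      intro i j
      have hsum : ∑ i, ∑ j, (X - Z) i j * (X - Z) i j = 0 := hzero
      have houter : ∀ i ∈ Finset.univ, (∑ j, (X - Z) i j * (X - Z) i j) = 0 := by
        exact (Finset.sum_eq_zero_iff_of_nonneg
          (fun i _ => Finset.sum_nonneg fun j _ => mul_self_nonneg _)).mp hsum
      have hinner := (Finset.sum_eq_zero_iff_of_nonneg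
        (fun j _ => mul_self_nonneg ((X - Z) i j))).mp (houter i (Finset.mem_univ i)) j
        (Finset.mem_univ j)
      exact mul_self_eq_zero.mp hinner
    have : X - Z = 0 := by ext i j; exact hentry i j
    exact sub_eq_zero.mp this
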